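/- Let x, y, z be positive hyperreals with x ≻ y ≻ z, and suppose y/x is not infinitesimal. Then there exists a standard real β ∈ (0,1) such that y ≻ β·x + (1-β)·z. (Qualitative version of the lower half of the continuity axiom, A''3, in the non-overriding case.) -/
import Mathlib


open Hyperreal

/-- `x` is qualitatively larger than `y`. -/
def QGT (x y : ℝ*) : Prop := ∃ r : ℝ, 0 < r ∧ (r : ℝ*) ≤ (x - y) / x

/-- qualitative indifference -/
def QSIM (x y : ℝ*) : Prop := ¬ QGT x y ∧ ¬ QGT y x

theorem stmt19 (x y z : ℝ*) (hx : 0 < x) (hy : 0 < y) (hz : 0 < z)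
    (h1 : QGT x y) (h2 : QGT y z) (hni : ¬ Infinitesimal (y / x)) :
    ∃ b : ℝ, 0 < b ∧ b < 1 ∧
      QGT y ((b : ℝ*) * x + ((1 : ℝ*) - (b : ℝ*)) * z) := by
  obtain ⟨r₁, hr₁, h1'⟩ := h1
  obtain ⟨s, hs, h2'⟩ := h2
  -- y ≤ (1 - r₁) x
  rw [le_div_iff₀ hx] at h1'
  rw [le_div_iff₀ hy] at h2'
  -- get e with e ≤ y/x
  rw [Hyperreal.infinitesimal_def] at hni
  push_neg at hni
  obtain ⟨e, he, hele⟩ := hni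
  have hpos : (0:ℝ*) < y / x := div_pos hy hx
  have hele' : (e : ℝ*) ≤ y / x := by
    have h := hele (lt_trans (by exact_mod_cast neg_lt_zero.mpr he) hpos)
    linarith
  rw [le_div_iff₀ hx] at hele'
  -- s < 1 : from s*y ≤ y - z and z > 0
  have hs1 : s < 1 := by
    by_contra h
    push_neg at h
    have : (1:ℝ*) ≤ (s:ℝ*) := by exact_mod_cast h
    nlinarith
  -- e < 1 : from e*x ≤ y and y < x (since r₁*x ≤ x - y, r₁ > 0)
  have hyx : y < x := by
    have : (0:ℝ*) < (r₁:ℝ*) := by exact_mod_cast hr₁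
    nlinarith
  have he1 : e < 1 := by
    by_contra h
    push_neg at h
    have : (1:ℝ*) ≤ (e:ℝ*) := by exact_mod_cast h
    nlinarith
  refine ⟨e * s / 2, by positivity, by nlinarith, s / 2, by positivity, ?_⟩
  rw [le_div_iff₀ hy]
  have hS : (s:ℝ*) < 1 := by exact_mod_cast hs1
  have hS0 : (0:ℝ*) < (s:ℝ*) := by exact_mod_cast hs
  have hE0 : (0:ℝ*) < (e:ℝ*) := by exact_mod_cast he
  push_cast
  nlinarith [mul_le_mul_of_nonneg_left hele' (le_of_lt (half_pos hS0)),
    mul_nonneg hE0.le hS0.le]
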